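/- Let D = Dⁿ ∪ Dˣ be a database instance, Q a monotone Boolean query with ¬Q(∅), and suppose D ⊨ Q. A tuple t ∈ Dⁿ is an actual cause for Q if and only if 𝒟(M, t) ≠ ∅, i.e., there exists a subset-minimal diagnosis for the diagnosis problem M associated with Q that contains t. (Proposition on actual causes and diagnoses.) -/
import Mathlib


/-- `t` is an actual cause for query `Q` in instance `D` with endogenous part `Dn`. -/
def IsCause {U : Type*} [DecidableEq U] (D Dn : Finset U) (Q : Finset U → Prop) (t : U) : Prop :=
  t ∈ Dn ∧ ∃ Γ ⊆ Dn, t ∉ Γ ∧ Q (D \ Γ) ∧ ¬ Q (D \ insert t Γ)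

/-- A diagnosis for the diagnosis problem `M` associated with `Q` on `D` (endogenous
part `Dn`): a set `Δ ⊆ Dn` of tuples whose abnormality restores consistency, i.e.
`D ∖ Δ ⊭ Q`. -/
def IsDiagnosis {U : Type*} [DecidableEq U] (D Dn : Finset U) (Q : Finset U → Prop)
    (Δ : Finset U) : Prop :=
  Δ ⊆ Dn ∧ ¬ Q (D \ Δ)

/-- A subset-minimal diagnosis. -/
def IsMinDiagnosis {U : Type*} [DecidableEq U] (D Dn : Finset U) (Q : Finset U → Prop)
    (Δ : Finset U) : Prop :=
  IsDiagnosis D Dn Q Δ ∧ ∀ Δ' ⊂ Δ, ¬ IsDiagnosis D Dn Q Δ'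

private lemma exists_min_sub {U : Type*} [DecidableEq U] (D Dn : Finset U)
    (Q : Finset U → Prop) :
    ∀ n (Δ : Finset U), Δ.card = n → IsDiagnosis D Dn Q Δ →
      ∃ Δ', Δ' ⊆ Δ ∧ IsMinDiagnosis D Dn Q Δ' := by
  intro n
  induction n using Nat.strong_induction_on with
  | _ n ih =>
    intro Δ hcard hΔ
    by_cases hmin : ∀ Δ' ⊂ Δ, ¬ IsDiagnosis D Dn Q Δ'
    · exact ⟨Δ, subset_rfl, hΔ, hmin⟩
    · push_neg at hmin
      obtain ⟨Δ', hsub, hΔ'⟩ := hmin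
      obtain ⟨Δ'', h1, h2⟩ := ih Δ'.card (hcard ▸ Finset.card_lt_card hsub) Δ' rfl hΔ'
      exact ⟨Δ'', h1.trans hsub.subset, h2⟩

/-- A tuple `t ∈ Dⁿ` is an actual cause for `Q` iff `𝒟(M, t) ≠ ∅`, i.e. some
subset-minimal diagnosis contains `t`. -/
theorem cause_iff_minimal_diagnosis
    {U : Type*} [DecidableEq U] (D Dn Dx : Finset U) (Q : Finset U → Prop)
    (hD : D = Dn ∪ Dx) (hdisj : Disjoint Dn Dx)
    (hmono : ∀ S S' : Finset U, S ⊆ S' → Q S → Q S')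
    (hempty : ¬ Q ∅) (hQD : Q D)
    (t : U) (ht : t ∈ Dn) :
    IsCause D Dn Q t ↔ ∃ Δ, IsMinDiagnosis D Dn Q Δ ∧ t ∈ Δ := by
  constructor
  · rintro ⟨-, Γ, hΓDn, htΓ, hQΓ, hnQ⟩
    have hdiag : IsDiagnosis D Dn Q (insert t Γ) :=
      ⟨Finset.insert_subset ht hΓDn, hnQ⟩
    obtain ⟨Δ, hΔsub, hΔmin⟩ := exists_min_sub D Dn Q _ (insert t Γ) rfl hdiag
    refine ⟨Δ, hΔmin, ?_⟩
    by_contra htΔ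
    have hΔΓ : Δ ⊆ Γ := fun x hx => by
      rcases Finset.mem_insert.mp (hΔsub hx) with h | h
      · exact absurd (h ▸ hx) htΔ
      · exact h
    exact hΔmin.1.2 (hmono _ _ (Finset.sdiff_subset_sdiff subset_rfl hΔΓ) hQΓ)
  · rintro ⟨Δ, ⟨⟨hΔDn, hnQ⟩, hmin⟩, htΔ⟩
    refine ⟨ht, Δ \ {t}, (Finset.sdiff_subset).trans hΔDn, by simp, ?_, ?_⟩
    · by_contra hQ
      exact hmin (Δ \ {t}) (Finset.sdiff_ssubset (by simpa using htΔ) (by simp))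
        ⟨(Finset.sdiff_subset).trans hΔDn, hQ⟩
    · have : insert t (Δ \ {t}) = Δ := by
        rw [Finset.insert_eq, Finset.union_sdiff_self_eq_union]
        simpa using htΔ
      rw [this]; exact hnQ
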